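/- Let B ∈ ℝ^{m_B×n}, c, y, g ∈ ℝⁿ, and λ > 0. Assume cᵀy < 0, ‖By‖₁ > 0, ‖Bg‖₁ > 0, ‖B(y − λg)‖₁ > 0, that cᵀg/‖Bg‖₁ > cᵀy/‖By‖₁, and that ‖B(y − λg)‖₁ ≤ ‖By‖₁ − λ‖Bg‖₁. Then cᵀ(y − λg)/‖B(y − λg)‖₁ < cᵀy/‖By‖₁. -/
import Mathlib


open Finset Matrix

/-- Steepness arithmetic. If `cᵀy < 0`, the three `ℓ¹`-norms are positive,
`g` is strictly less steep than `y`, and `‖B(y − λg)‖₁ ≤ ‖By‖₁ − λ‖Bg‖₁`, then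
`y − λg` is strictly steeper than `y`. -/
theorem steepness_strict_decrease
    (n mB : ℕ) (B : Matrix (Fin mB) (Fin n) ℝ)
    (c y g : Fin n → ℝ) (lam : ℝ) (hlam : 0 < lam)
    (hcy : c ⬝ᵥ y < 0)
    (hBy : 0 < ∑ i, |B.mulVec y i|)
    (hBg : 0 < ∑ i, |B.mulVec g i|)
    (hByg : 0 < ∑ i, |B.mulVec (y - lam • g) i|)
    (hsteep : c ⬝ᵥ g / (∑ i, |B.mulVec g i|) > c ⬝ᵥ y / (∑ i, |B.mulVec y i|))
    (hnorm : ∑ i, |B.mulVec (y - lam • g) i| ≤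
      (∑ i, |B.mulVec y i|) - lam * ∑ i, |B.mulVec g i|) :
    c ⬝ᵥ (y - lam • g) / (∑ i, |B.mulVec (y - lam • g) i|) <
      c ⬝ᵥ y / (∑ i, |B.mulVec y i|) := by
  have key : c ⬝ᵥ (y - lam • g) = c ⬝ᵥ y - lam * (c ⬝ᵥ g) := by
    simp [dotProduct_sub, dotProduct_smul, smul_eq_mul]
  rw [key, div_lt_div_iff₀ hByg hBy]
  rw [gt_iff_lt, div_lt_div_iff₀ hBy hBg] at hsteep
  nlinarith [mul_pos hlam hBg, mul_lt_mul_of_pos_left hsteep hlam]
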